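/- Let p be a prime, k a perfect field of characteristic p, and V a finite-dimensional k-vector space. Let φ : V → V be an additive map with φ(a·x) = a^p·φ(x) for all a ∈ k, x ∈ V, and let ϑ : V → V be an additive map with ϑ(a^p·x) = a·ϑ(x) for all a ∈ k, x ∈ V. Assume that the image of φ equals the kernel of ϑ and the kernel of φ equals the image of ϑ. If e : V → V is a k-linear endomorphism satisfying e∘φ = φ∘e and e∘ϑ = ϑ∘e, then every coefficient c of the characteristic polynomial of e satisfies c^p = c (i.e. the characteristic polynomial of e has coefficients in the prime field 𝔽_p). -/

import Mathlib

open LinearMap Polynomial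

section Factor

variable {k V : Type*} [Field k] [AddCommGroup V] [Module k V] [FiniteDimensional k V]

/-- Characteristic polynomial factorization for an invariant submodule with a chosen
complement: it is the product of the charpoly of the restriction and of the compression
to the complement. -/
lemma charpoly_restrict_mul_compression (f : V →ₗ[k] V) (W D : Submodule k V)
    (h : IsCompl W D) (hW : ∀ x ∈ W, f x ∈ W) :
    f.charpoly = (f.restrict hW).charpoly *
      ((D.linearProjOfIsCompl W h.symm) ∘ₗ f ∘ₗ D.subtype).charpoly := by
  classical
  set bW := Module.finBasis k W with hbW
  set bD := Module.finBasis k D with hbD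
  set Φ := Submodule.prodEquivOfIsCompl W D h with hΦ
  set b : Module.Basis _ k V := (bW.prod bD).map Φ with hbdef
  have hsymm : ∀ x : V, Φ.symm x =
      (W.linearProjOfIsCompl D h x, D.linearProjOfIsCompl W h.symm x) := by
    intro x
    apply Φ.injective
    rw [LinearEquiv.apply_symm_apply]
    simp [hΦ]
    exact (Submodule.projection_add_projection_eq_self h x).symm
  have hmat : LinearMap.toMatrix b b f =
      Matrix.fromBlocks (LinearMap.toMatrix bW bW (f.restrict hW))
        (Matrix.of fun i j => bW.repr (W.linearProjOfIsCompl D h (f (bD j))) i) 0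
        (LinearMap.toMatrix bD bD ((D.linearProjOfIsCompl W h.symm) ∘ₗ f ∘ₗ D.subtype)) := by
    ext i j
    have hbapply : ∀ j, b (Sum.inl j) = (bW j : V) := by
      intro j
      simp [hbdef, hΦ, Module.Basis.prod_apply]
    have hbapply' : ∀ j, b (Sum.inr j) = (bD j : V) := by
      intro j
      simp [hbdef, hΦ, Module.Basis.prod_apply]
    have hrepr : ∀ (x : V) (i), b.repr x i = (bW.prod bD).repr (Φ.symm x) i := by
      intro x i
      simp [hbdef]
    rcases i with i | i <;> rcases j with j | j
    · rw [LinearMap.toMatrix_apply, hbapply, hrepr, hsymm, Module.Basis.prod_repr_inl]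
      rw [Matrix.fromBlocks_apply₁₁, LinearMap.toMatrix_apply]
      dsimp only
      have heq : (W.linearProjOfIsCompl D h) (f ((bW j) : V)) = (f.restrict hW) (bW j) := by
        rw [LinearMap.restrict_apply]
        exact Submodule.linearProjOfIsCompl_apply_left h ⟨f ((bW j) : V), hW _ (bW j).2⟩
      rw [heq]
    · rw [LinearMap.toMatrix_apply, hbapply', hrepr, hsymm, Module.Basis.prod_repr_inl]
      simp [Matrix.fromBlocks_apply₁₂]
    · rw [LinearMap.toMatrix_apply, hbapply, hrepr, hsymm, Module.Basis.prod_repr_inr]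
      rw [Matrix.fromBlocks_apply₂₁]
      rw [show (D.linearProjOfIsCompl W h.symm) (f (bW j)) = 0 from
        Submodule.linearProjOfIsCompl_apply_right' h.symm (hW _ (bW j).2)]
      simp
    · rw [LinearMap.toMatrix_apply, hbapply', hrepr, hsymm, Module.Basis.prod_repr_inr]
      rw [Matrix.fromBlocks_apply₂₂, LinearMap.toMatrix_apply]
      simp
  rw [← LinearMap.charpoly_toMatrix f b, hmat, Matrix.charpoly_fromBlocks_zero₂₁,
    LinearMap.charpoly_toMatrix, LinearMap.charpoly_toMatrix]

/-- Two endomorphisms intertwined by an "exact pair" of maps have the same charpoly. -/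
lemma charpoly_eq_of_exact_pair (f g F S : V →ₗ[k] V)
    (h1 : ∀ x, f (F x) = F (g x)) (h2 : ∀ x, g (S x) = S (f x))
    (h3 : range F = ker S) (h4 : ker F = range S) :
    f.charpoly = g.charpoly := by
  classical
  obtain ⟨C, hC⟩ := Submodule.exists_isCompl (ker F)
  obtain ⟨D, hD⟩ := Submodule.exists_isCompl (range F)
  have hfW : ∀ x ∈ range F, f x ∈ range F := by
    rintro x ⟨y, rfl⟩; exact ⟨g y, (h1 y).symm⟩
  have hgU : ∀ x ∈ ker F, g x ∈ ker F := by
    rw [h4]; rintro x ⟨y, rfl⟩; exact ⟨f y, (h2 y).symm⟩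
  set gC : C →ₗ[k] C := (C.linearProjOfIsCompl (ker F) hC.symm) ∘ₗ g ∘ₗ C.subtype with hgC
  set fD : D →ₗ[k] D := (D.linearProjOfIsCompl (range F) hD.symm) ∘ₗ f ∘ₗ D.subtype with hfD
  -- decomposition facts
  have hdecC : ∀ x : V, x - (C.linearProjOfIsCompl (ker F) hC.symm x : V) ∈ ker F := by
    intro x
    have : ((ker F).linearProjOfIsCompl C hC x : V) + (C.linearProjOfIsCompl (ker F) hC.symm x : V) = x :=
      Submodule.projection_add_projection_eq_self hC x
    rw [sub_eq_of_eq_add this.symm]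
    exact Submodule.coe_mem _
  have hdecD : ∀ x : V, x - (D.linearProjOfIsCompl (range F) hD.symm x : V) ∈ range F := by
    intro x
    have : ((range F).linearProjOfIsCompl D hD x : V) + (D.linearProjOfIsCompl (range F) hD.symm x : V) = x :=
      Submodule.projection_add_projection_eq_self hD x
    rw [sub_eq_of_eq_add this.symm]
    exact Submodule.coe_mem _
  -- E1 : C ≃ₗ range F
  set F1 : C →ₗ[k] range F :=
    (F ∘ₗ C.subtype).codRestrict (range F) (fun c => ⟨c, rfl⟩) with hF1
  have hF1inj : Function.Injective F1 := by
    rw [← LinearMap.ker_eq_bot, LinearMap.ker_eq_bot']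
    intro c hc
    have : F (c : V) = 0 := congrArg Subtype.val hc
    have hmem : (c : V) ∈ ker F ⊓ C := ⟨this, c.2⟩
    rw [hC.inf_eq_bot] at hmem
    exact Subtype.ext hmem
  have hF1surj : Function.Surjective F1 := by
    rintro ⟨x, y, rfl⟩
    refine ⟨C.linearProjOfIsCompl (ker F) hC.symm y, ?_⟩
    apply Subtype.ext
    show F (C.linearProjOfIsCompl (ker F) hC.symm y : V) = F y
    have := hdecC y
    rw [LinearMap.mem_ker, map_sub, sub_eq_zero] at this
    exact this.symm
  set E1 := LinearEquiv.ofBijective F1 ⟨hF1inj, hF1surj⟩ with hE1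
  have hconj1 : (f.restrict hfW).charpoly = gC.charpoly := by
    have key : ∀ c : C, (f.restrict hfW) (E1 c) = E1 (gC c) := by
      intro c
      apply Subtype.ext
      show f (F (c : V)) = F (C.linearProjOfIsCompl (ker F) hC.symm (g c) : V)
      rw [h1]
      have := hdecC (g (c : V))
      rw [LinearMap.mem_ker, map_sub, sub_eq_zero] at this
      exact this
    have : f.restrict hfW = E1.conj gC := by
      apply LinearMap.ext
      intro x
      obtain ⟨c, rfl⟩ := E1.surjective x
      rw [LinearEquiv.conj_apply]
      simp only [LinearMap.coe_comp, Function.comp_apply, LinearEquiv.coe_coe,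
        LinearEquiv.symm_apply_apply]
      exact key c
    rw [this, LinearEquiv.charpoly_conj]
  -- E2 : D ≃ₗ ker F
  have hSD : ∀ d : D, S (d : V) ∈ ker F := by
    intro d; rw [h4]; exact ⟨d, rfl⟩
  set S1 : D →ₗ[k] ker F := (S ∘ₗ D.subtype).codRestrict (ker F) hSD with hS1
  have hS1inj : Function.Injective S1 := by
    rw [← LinearMap.ker_eq_bot, LinearMap.ker_eq_bot']
    intro d hd
    have : S (d : V) = 0 := congrArg Subtype.val hd
    have hmem : (d : V) ∈ range F ⊓ D :=
      ⟨(le_of_eq h3.symm) (LinearMap.mem_ker.mpr this), d.2⟩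
    rw [hD.inf_eq_bot] at hmem
    exact Subtype.ext hmem
  have hS1surj : Function.Surjective S1 := by
    rintro ⟨x, hx⟩
    rw [h4] at hx
    obtain ⟨y, rfl⟩ := hx
    refine ⟨D.linearProjOfIsCompl (range F) hD.symm y, ?_⟩
    apply Subtype.ext
    show S (D.linearProjOfIsCompl (range F) hD.symm y : V) = S y
    have h5 := (le_of_eq h3) (hdecD y)
    rw [LinearMap.mem_ker, map_sub, sub_eq_zero] at h5
    exact h5.symm
  set E2 := LinearEquiv.ofBijective S1 ⟨hS1inj, hS1surj⟩ with hE2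
  have hconj2 : (g.restrict hgU).charpoly = fD.charpoly := by
    have key : ∀ d : D, (g.restrict hgU) (E2 d) = E2 (fD d) := by
      intro d
      apply Subtype.ext
      show g (S (d : V)) = S (D.linearProjOfIsCompl (range F) hD.symm (f d) : V)
      rw [h2]
      have h5 := (le_of_eq h3) (hdecD (f (d : V)))
      rw [LinearMap.mem_ker, map_sub, sub_eq_zero] at h5
      exact h5
    have : g.restrict hgU = E2.conj fD := by
      apply LinearMap.ext
      intro x
      obtain ⟨d, rfl⟩ := E2.surjective x
      rw [LinearEquiv.conj_apply]
      simp only [LinearMap.coe_comp, Function.comp_apply, LinearEquiv.coe_coe,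
        LinearEquiv.symm_apply_apply]
      exact key d
    rw [this, LinearEquiv.charpoly_conj]
  have hf := charpoly_restrict_mul_compression f (range F) D hD hfW
  have hg := charpoly_restrict_mul_compression g (ker F) C hC hgU
  rw [hf, hg, hconj1, hconj2, mul_comm]

end Factor

/-- If `e` is a linear endomorphism of a finite-dimensional vector space over a perfect field
`k` of characteristic `p` commuting with a Frobenius-semilinear `φ` and an
inverse-Frobenius-semilinear `ϑ` with `im φ = ker ϑ` and `ker φ = im ϑ`, then the coefficients
of the characteristic polynomial of `e` lie in the prime field `𝔽_p`. -/
theorem charpoly_coeff_pow_p_eq (p : ℕ) [Fact p.Prime] (k : Type*) [Field k] [CharP k p]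
    [PerfectRing k p] (V : Type*) [AddCommGroup V] [Module k V] [FiniteDimensional k V]
    (φ ϑ : V → V)
    (hφadd : ∀ x y, φ (x + y) = φ x + φ y)
    (hφsemi : ∀ (a : k) (x : V), φ (a • x) = (a ^ p) • φ x)
    (hϑadd : ∀ x y, ϑ (x + y) = ϑ x + ϑ y)
    (hϑsemi : ∀ (a : k) (x : V), ϑ ((a ^ p) • x) = a • ϑ x)
    (him : Set.range φ = {x : V | ϑ x = 0})
    (hker : {x : V | φ x = 0} = Set.range ϑ)
    (e : V →ₗ[k] V)
    (heφ : ∀ x, e (φ x) = φ (e x))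
    (heϑ : ∀ x, e (ϑ x) = ϑ (e x)) :
    ∀ i : ℕ, (LinearMap.charpoly e).coeff i ^ p = (LinearMap.charpoly e).coeff i := by
  classical
  set b := Module.finBasis k V with hb
  set σ : k →+* k := frobenius k p with hσ
  set τ : k → k := fun a => (frobeniusEquiv k p).symm a with hτ
  -- coordinatewise Frobenius and its inverse
  set Fr : V → V := fun x => b.repr.symm ((b.repr x).mapRange σ (map_zero σ)) with hFr
  set Fi : V → V := fun x => b.repr.symm ((b.repr x).mapRange τ (map_zero (frobeniusEquiv k p).symm)) with hFi
  have hcoordFr : ∀ (x : V) (i), b.repr (Fr x) i = σ (b.repr x i) := by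
    intro x i
    simp [hFr, Finsupp.mapRange_apply]
  have hcoordFi : ∀ (x : V) (i), b.repr (Fi x) i = τ (b.repr x i) := by
    intro x i
    simp [hFi, Finsupp.mapRange_apply]
  have hστ : ∀ a : k, σ (τ a) = a := fun a => frobenius_apply_frobeniusEquiv_symm k p a
  have hτσ : ∀ a : k, τ (σ a) = a := fun a => frobeniusEquiv_symm_apply_frobenius k p a
  have hFrFi : ∀ x, Fr (Fi x) = x := by
    intro x
    apply b.repr.injective
    refine Finsupp.ext fun i => ?_
    rw [hcoordFr, hcoordFi, hστ]
  have hFiFr : ∀ x, Fi (Fr x) = x := by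
    intro x
    apply b.repr.injective
    refine Finsupp.ext fun i => ?_
    rw [hcoordFi, hcoordFr, hτσ]
  have hFr0 : Fr (0 : V) = 0 := by
    apply b.repr.injective
    refine Finsupp.ext fun i => ?_
    simp [hcoordFr]
  have hFi0 : Fi (0 : V) = 0 := by
    apply b.repr.injective
    refine Finsupp.ext fun i => ?_
    simp [hcoordFi, hτ]
  have hFradd : ∀ x y, Fr (x + y) = Fr x + Fr y := by
    intro x y
    apply b.repr.injective
    refine Finsupp.ext fun i => ?_
    simp [hcoordFr, map_add σ]
  have hFiadd : ∀ x y, Fi (x + y) = Fi x + Fi y := by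
    intro x y
    apply b.repr.injective
    refine Finsupp.ext fun i => ?_
    simp only [map_add, Finsupp.add_apply, hcoordFi]
    rw [hτ]
    simp only [map_add]
  have hFrsmul : ∀ (a : k) (x : V), Fr (a • x) = (a ^ p) • Fr x := by
    intro a x
    apply b.repr.injective
    refine Finsupp.ext fun i => ?_
    simp only [map_smul, Finsupp.smul_apply, smul_eq_mul, hcoordFr, map_mul, hσ]
    rfl
  have hFismul : ∀ (a : k) (x : V), Fi (a • x) = (τ a) • Fi x := by
    intro a x
    apply b.repr.injective
    refine Finsupp.ext fun i => ?_
    simp only [map_smul, Finsupp.smul_apply, smul_eq_mul, hcoordFi]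
    rw [hτ]
    simp only [map_mul]
  have hτp : ∀ a : k, (τ a) ^ p = a := fun a => frobeniusEquiv_symm_pow_p k p a
  -- the two linear maps
  set F : V →ₗ[k] V :=
    { toFun := fun x => φ (Fi x)
      map_add' := fun x y => by
        show φ (Fi (x + y)) = φ (Fi x) + φ (Fi y)
        rw [hFiadd, hφadd]
      map_smul' := fun a x => by
        show φ (Fi (a • x)) = a • φ (Fi x)
        rw [hFismul, hφsemi, hτp] } with hFdef
  set S : V →ₗ[k] V :=
    { toFun := fun x => Fr (ϑ x)
      map_add' := fun x y => by
        show Fr (ϑ (x + y)) = Fr (ϑ x) + Fr (ϑ y)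
        rw [hϑadd, hFradd]
      map_smul' := fun a x => by
        show Fr (ϑ (a • x)) = a • Fr (ϑ x)
        have h : a • x = ((τ a) ^ p) • x := by rw [hτp]
        rw [h, hϑsemi, hFrsmul, hτp] } with hSdef
  -- the Frobenius twist of e
  set g : V →ₗ[k] V := Matrix.toLin b b ((LinearMap.toMatrix b b e).map σ) with hgdef
  have hgFr : ∀ y, g (Fr y) = Fr (e y) := by
    intro y
    apply b.repr.injective
    refine Finsupp.ext fun i => ?_
    have hm1 : (LinearMap.toMatrix b b g) = (LinearMap.toMatrix b b e).map σ := by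
      rw [hgdef, LinearMap.toMatrix_toLin]
    have hm2 := congrFun (LinearMap.toMatrix_mulVec_repr b b g (Fr y)) i
    have hm3 := congrFun (LinearMap.toMatrix_mulVec_repr b b e y) i
    rw [hcoordFr (e y) i, ← hm3, ← hm2, hm1]
    simp only [Matrix.mulVec, dotProduct, Matrix.map_apply, map_sum, map_mul]
    refine Finset.sum_congr rfl fun j _ => ?_
    rw [hcoordFr y j]
  have h1 : ∀ x, e (F x) = F (g x) := by
    intro x
    show e (φ (Fi x)) = φ (Fi (g x))
    rw [heφ]
    congr 1
    have : g x = Fr (e (Fi x)) := by rw [← hgFr (Fi x), hFrFi]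
    rw [this, hFiFr]
  have h2 : ∀ x, g (S x) = S (e x) := by
    intro x
    show g (Fr (ϑ x)) = Fr (ϑ (e x))
    rw [hgFr, heϑ]
  have h3 : LinearMap.range F = LinearMap.ker S := by
    ext x
    simp only [LinearMap.mem_range, LinearMap.mem_ker]
    constructor
    · rintro ⟨y, rfl⟩
      show Fr (ϑ (φ (Fi y))) = 0
      have : ϑ (φ (Fi y)) = 0 := by
        have : φ (Fi y) ∈ Set.range φ := ⟨Fi y, rfl⟩
        rwa [him] at this
      rw [this, hFr0]
    · intro hx
      have hϑx : ϑ x = 0 := by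
        have h6 : Fi (Fr (ϑ x)) = Fi 0 := congrArg Fi hx
        rw [hFiFr, hFi0] at h6
        exact h6
      have : x ∈ Set.range φ := by rw [him]; exact hϑx
      obtain ⟨z, rfl⟩ := this
      exact ⟨Fr z, by show φ (Fi (Fr z)) = φ z; rw [hFiFr]⟩
  have h4 : LinearMap.ker F = LinearMap.range S := by
    ext x
    simp only [LinearMap.mem_range, LinearMap.mem_ker]
    constructor
    · intro hx
      have : Fi x ∈ Set.range ϑ := by
        rw [← hker]; exact hx
      obtain ⟨z, hz⟩ := this
      exact ⟨z, by show Fr (ϑ z) = x; rw [hz, hFrFi]⟩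
    · rintro ⟨y, rfl⟩
      show φ (Fi (Fr (ϑ y))) = 0
      rw [hFiFr]
      have : ϑ y ∈ Set.range ϑ := ⟨y, rfl⟩
      rw [← hker] at this
      exact this
  have hcp : e.charpoly = g.charpoly := charpoly_eq_of_exact_pair e g F S h1 h2 h3 h4
  have hgc : g.charpoly = e.charpoly.map σ := by
    rw [hgdef, ← LinearMap.charpoly_toMatrix e b]
    rw [← Matrix.charpoly_map]
    rw [← LinearMap.charpoly_toMatrix (Matrix.toLin b b ((LinearMap.toMatrix b b e).map σ)) b]
    rw [LinearMap.toMatrix_toLin]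
  intro i
  have := congrArg (fun q => Polynomial.coeff q i) (hcp.trans hgc)
  simp only [Polynomial.coeff_map] at this
  conv_rhs => rw [this]
  rfl
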